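/- Let 0 < q₁ < p₁ ≤ 1, 0 < q₂ < p₂ ≤ 1, let n, m ≥ 1, let α₁, α₂ ∈ (0,1], let M > 0, and let f : [0,1]² → ℝ satisfy the Lipschitz condition |f(s,t) - f(x,y)| ≤ M |s - x|^{α₁} |t - y|^{α₂} for all (s,t), (x,y) ∈ [0,1]². Then for every (x,y) ∈ [0,1]², |B_{n,m}(f;x,y) - f(x,y)| ≤ M ( (p₁^{n-1}/[n]_{p₁,q₁})(x - x²) )^{α₁/2} ( (p₂^{m-1}/[m]_{p₂,q₂})(y - y²) )^{α₂/2}. -/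

import Mathlib

open Finset Set Filter Topology

/-- The (p,q)-integer `[n]_{p,q} = ∑_{i=0}^{n-1} p^(n-1-i) q^i`. -/
noncomputable def pqInt (p q : ℝ) (n : ℕ) : ℝ :=
  ∑ i ∈ Finset.range n, p ^ (n - 1 - i) * q ^ i

/-- The (p,q)-factorial `[n]_{p,q}! = ∏_{j=1}^n [j]_{p,q}`. -/
noncomputable def pqFactorial (p q : ℝ) (n : ℕ) : ℝ :=
  ∏ j ∈ Finset.range n, pqInt p q (j + 1)

/-- The (p,q)-binomial coefficient. -/
noncomputable def pqChoose (p q : ℝ) (n k : ℕ) : ℝ :=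
  pqFactorial p q n / (pqFactorial p q k * pqFactorial p q (n - k))

/-- The node `p^(n-k) [k]_{p,q} / [n]_{p,q}` of the (p,q)-Bernstein operator. -/
noncomputable def pqNode (p q : ℝ) (n k : ℕ) : ℝ :=
  p ^ (n - k) * pqInt p q k / pqInt p q n

/-- The basis function
`p^((k(k-1)-n(n-1))/2) C(n,k)_{p,q} x^k ∏_{s=0}^{n-k-1} (p^s - q^s x)`,
where `p^((k(k-1)-n(n-1))/2)` is written as `p^(k(k-1)/2) / p^(n(n-1)/2)`. -/
noncomputable def pqBasis (p q : ℝ) (n k : ℕ) (x : ℝ) : ℝ :=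
  (p ^ (k.choose 2) / p ^ (n.choose 2)) * pqChoose p q n k * x ^ k *
    ∏ s ∈ Finset.range (n - k), (p ^ s - q ^ s * x)

/-- The (p,q)-Bernstein operator `B_{n,p,q}(f;x)`. -/
noncomputable def pqBernstein (p q : ℝ) (n : ℕ) (f : ℝ → ℝ) (x : ℝ) : ℝ :=
  ∑ k ∈ Finset.range (n + 1), pqBasis p q n k x * f (pqNode p q n k)

/-- The bivariate (p,q)-Bernstein operator
`B_{n,m}^{(p₁,q₁),(p₂,q₂)}(f;x,y)`. -/
noncomputable def pqBernstein2 (p₁ q₁ p₂ q₂ : ℝ) (n m : ℕ)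
    (f : ℝ → ℝ → ℝ) (x y : ℝ) : ℝ :=
  ∑ k ∈ Finset.range (n + 1), ∑ j ∈ Finset.range (m + 1),
    pqBasis p₁ q₁ n k x * pqBasis p₂ q₂ m j y *
      f (pqNode p₁ q₁ n k) (pqNode p₂ q₂ m j)

lemma pqInt_succ (p q : ℝ) (n : ℕ) : pqInt p q (n + 1) = p ^ n + q * pqInt p q n := by
  unfold pqInt
  rw [Finset.sum_range_succ']
  simp only [Nat.add_sub_cancel, Nat.sub_zero, pow_zero, mul_one, Finset.mul_sum]
  rw [add_comm]
  congr 1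
  refine Finset.sum_congr rfl fun i hi => ?_
  have : n - (i + 1) = n - 1 - i := by omega
  rw [this, pow_succ]
  ring

lemma pqInt_succ' (p q : ℝ) (n : ℕ) : pqInt p q (n + 1) = p * pqInt p q n + q ^ n := by
  unfold pqInt
  rw [Finset.sum_range_succ]
  simp only [Nat.add_sub_cancel, Nat.sub_self, pow_zero, one_mul, Finset.mul_sum]
  congr 1
  refine Finset.sum_congr rfl fun i hi => ?_
  simp only [Finset.mem_range] at hi
  have : n - i = (n - 1 - i) + 1 := by omega
  rw [this, pow_succ]
  ring

lemma pqInt_zero (p q : ℝ) : pqInt p q 0 = 0 := by simp [pqInt]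

lemma pqInt_one (p q : ℝ) : pqInt p q 1 = 1 := by simp [pqInt]

lemma pqInt_add (p q : ℝ) (a b : ℕ) :
    pqInt p q (a + b) = p ^ b * pqInt p q a + q ^ a * pqInt p q b := by
  induction b with
  | zero => simp [pqInt_zero]
  | succ b ih =>
      rw [← Nat.add_assoc, pqInt_succ, ih, pqInt_succ]
      have h : p ^ a + q * pqInt p q a = p * pqInt p q a + q ^ a := by
        rw [← pqInt_succ, pqInt_succ']
      have hpab : p ^ (a + b) = p ^ a * p ^ b := pow_add p a b
      have hpb1 : p ^ (b + 1) = p ^ b * p := pow_succ p b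
      linear_combination p ^ b * h + hpab + pqInt p q a * hpb1

lemma pqInt_pos {p q : ℝ} (hp : 0 < p) (hq : 0 < q) {n : ℕ} (hn : 1 ≤ n) :
    0 < pqInt p q n := by
  unfold pqInt
  apply Finset.sum_pos (fun i _ => by positivity)
  exact Finset.nonempty_range_iff.mpr (by omega)

lemma pqInt_nonneg {p q : ℝ} (hp : 0 < p) (hq : 0 < q) (n : ℕ) :
    0 ≤ pqInt p q n := by
  unfold pqInt
  exact Finset.sum_nonneg fun i _ => by positivity

lemma pqFactorial_pos {p q : ℝ} (hp : 0 < p) (hq : 0 < q) (n : ℕ) :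
    0 < pqFactorial p q n := by
  unfold pqFactorial
  exact Finset.prod_pos fun j _ => pqInt_pos hp hq (by omega)

lemma pqFactorial_succ (p q : ℝ) (n : ℕ) :
    pqFactorial p q (n + 1) = pqFactorial p q n * pqInt p q (n + 1) := by
  unfold pqFactorial; rw [Finset.prod_range_succ]

lemma pqFactorial_zero (p q : ℝ) : pqFactorial p q 0 = 1 := by simp [pqFactorial]

lemma pqChoose_pos {p q : ℝ} (hp : 0 < p) (hq : 0 < q) (n k : ℕ) :
    0 < pqChoose p q n k := by
  unfold pqChoose
  exact div_pos (pqFactorial_pos hp hq n)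
    (mul_pos (pqFactorial_pos hp hq k) (pqFactorial_pos hp hq (n - k)))

lemma pqChoose_zero {p q : ℝ} (hp : 0 < p) (hq : 0 < q) (n : ℕ) :
    pqChoose p q n 0 = 1 := by
  unfold pqChoose
  rw [pqFactorial_zero, one_mul, Nat.sub_zero,
    div_self (pqFactorial_pos hp hq n).ne']

lemma pqChoose_self {p q : ℝ} (hp : 0 < p) (hq : 0 < q) (n : ℕ) :
    pqChoose p q n n = 1 := by
  unfold pqChoose
  rw [Nat.sub_self, pqFactorial_zero, mul_one,
    div_self (pqFactorial_pos hp hq n).ne']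

/-- `C(n+1,k+1) [k+1] = [n+1] C(n,k)`. -/

lemma pqChoose_absorb {p q : ℝ} (hp : 0 < p) (hq : 0 < q) (n k : ℕ) :
    pqChoose p q (n + 1) (k + 1) * pqInt p q (k + 1)
      = pqInt p q (n + 1) * pqChoose p q n k := by
  unfold pqChoose
  have h1 : n + 1 - (k + 1) = n - k := by omega
  rw [h1, pqFactorial_succ p q n, pqFactorial_succ p q k]
  have a1 := (pqFactorial_pos hp hq n).ne'
  have a2 := (pqFactorial_pos hp hq k).ne'
  have a3 := (pqFactorial_pos hp hq (n - k)).ne'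
  have a4 : pqInt p q (k + 1) ≠ 0 := (pqInt_pos hp hq (by omega)).ne'
  field_simp

/-- Pascal rule: for `k ≤ n`, `C(n+1,k+1) = p^(k+1) C(n,k+1) + q^(n-k) C(n,k)`. -/

lemma pqChoose_pascal {p q : ℝ} (hp : 0 < p) (hq : 0 < q) {n k : ℕ} (hk : k + 1 ≤ n) :
    pqChoose p q (n + 1) (k + 1)
      = p ^ (k + 1) * pqChoose p q n (k + 1) + q ^ (n - k) * pqChoose p q n k := by
  obtain ⟨b, rfl⟩ : ∃ b, n = k + 1 + b := ⟨n - (k + 1), by omega⟩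
  have h1 : k + 1 + b + 1 - (k + 1) = b + 1 := by omega
  have h2 : k + 1 + b - (k + 1) = b := by omega
  have h3 : k + 1 + b - k = b + 1 := by omega
  have key : pqInt p q (k + 1 + b + 1)
      = p ^ (k + 1) * pqInt p q (b + 1) + q ^ (b + 1) * pqInt p q (k + 1) := by
    have := pqInt_add p q (b + 1) (k + 1)
    have hc : b + 1 + (k + 1) = k + 1 + b + 1 := by omega
    rw [hc] at this
    linarith [this]
  unfold pqChoose
  rw [h1, h2, h3]
  have e1 : pqFactorial p q (k + 1 + b + 1)
      = pqFactorial p q (k + 1 + b) * pqInt p q (k + 1 + b + 1) := pqFactorial_succ _ _ _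
  have e2 : pqFactorial p q (b + 1) = pqFactorial p q b * pqInt p q (b + 1) :=
    pqFactorial_succ _ _ _
  have e3 : pqFactorial p q (k + 1) = pqFactorial p q k * pqInt p q (k + 1) :=
    pqFactorial_succ _ _ _
  rw [e1, e2, e3, key]
  have a1 := (pqFactorial_pos hp hq (k + 1 + b)).ne'
  have a2 := (pqFactorial_pos hp hq k).ne'
  have a3 := (pqFactorial_pos hp hq b).ne'
  have a4 : pqInt p q (k + 1) ≠ 0 := (pqInt_pos hp hq (by omega)).ne'
  have a5 : pqInt p q (b + 1) ≠ 0 := (pqInt_pos hp hq (by omega)).ne'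
  field_simp

/-- Scaled basis function (no division by `p ^ (n.choose 2)`). -/

noncomputable def Tb (p q : ℝ) (n k : ℕ) (x : ℝ) : ℝ :=
  p ^ (k.choose 2) * pqChoose p q n k * x ^ k *
    ∏ s ∈ Finset.range (n - k), (p ^ s - q ^ s * x)

lemma Tb_sum {p q : ℝ} (hp : 0 < p) (hq : 0 < q) (x : ℝ) :
    ∀ n, ∑ k ∈ Finset.range (n + 1), Tb p q n k x = p ^ (n.choose 2) := by
  intro n
  induction n with
  | zero => simp [Tb, pqChoose_zero hp hq]
  | succ n ih =>
      set A : ℕ → ℝ := fun k => Tb p q n k x * (p ^ n - p ^ k * q ^ (n - k) * x) with hA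
      set B : ℕ → ℝ := fun k => Tb p q n k x * (p ^ k * q ^ (n - k) * x) with hB
      have h0 : Tb p q (n + 1) 0 x = A 0 := by
        simp only [hA, Tb, pqChoose_zero hp hq, Nat.sub_zero, Finset.prod_range_succ]
        ring
      have htop : Tb p q (n + 1) (n + 1) x = B n := by
        simp only [hB, Tb, pqChoose_self hp hq, Nat.sub_self, Nat.choose_succ_succ,
          Nat.choose_one_right, pow_add, Finset.range_zero, Finset.prod_empty]
        ring
      have hmid : ∀ k, k + 1 ≤ n → Tb p q (n + 1) (k + 1) x = A (k + 1) + B k := by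
        intro k hk
        obtain ⟨b, rfl⟩ : ∃ b, n = k + 1 + b := ⟨n - (k + 1), by omega⟩
        have s1 : k + 1 + b + 1 - (k + 1) = b + 1 := by omega
        have s2 : k + 1 + b - (k + 1) = b := by omega
        have s3 : k + 1 + b - k = b + 1 := by omega
        simp only [hA, hB, Tb, s1, s2, s3, pqChoose_pascal hp hq hk,
          Nat.choose_succ_succ, Nat.choose_one_right, pow_add,
          Finset.prod_range_succ]
        ring
      have hsplit : ∑ k ∈ Finset.range (n + 2), Tb p q (n + 1) k x
          = ∑ k ∈ Finset.range (n + 1), A k + ∑ k ∈ Finset.range (n + 1), B k := by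
        rw [Finset.sum_range_succ (f := fun k => Tb p q (n + 1) k x),
          Finset.sum_range_succ' (f := fun k => Tb p q (n + 1) k x),
          Finset.sum_range_succ (f := B), Finset.sum_range_succ' (f := A)]
        rw [h0, htop]
        have : ∑ k ∈ Finset.range n, Tb p q (n + 1) (k + 1) x
            = ∑ k ∈ Finset.range n, (A (k + 1) + B k) :=
          Finset.sum_congr rfl fun k hk => hmid k (by have := Finset.mem_range.mp hk; omega)
        rw [this, Finset.sum_add_distrib]
        ring
      rw [hsplit, ← Finset.sum_add_distrib]
      have : ∑ k ∈ Finset.range (n + 1), (A k + B k)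
          = p ^ n * ∑ k ∈ Finset.range (n + 1), Tb p q n k x := by
        rw [Finset.mul_sum]
        refine Finset.sum_congr rfl fun k _ => ?_
        simp only [hA, hB]; ring
      rw [this, ih, Nat.choose_succ_succ, Nat.choose_one_right, pow_add]

lemma Tb_absorb {p q : ℝ} (hp : 0 < p) (hq : 0 < q) (k b : ℕ) (x : ℝ) :
    Tb p q (k + b + 1) (k + 1) x * pqInt p q (k + 1)
      = p ^ k * pqInt p q (k + b + 1) * x * Tb p q (k + b) k x := by
  have s1 : k + b + 1 - (k + 1) = b := by omega
  have s2 : k + b - k = b := by omega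
  simp only [Tb, s1, s2, Nat.choose_succ_succ, Nat.choose_one_right, pow_add]
  have habs := pqChoose_absorb hp hq (k + b) k
  linear_combination (p ^ k.choose 2 * p ^ k * x ^ k * x *
    ∏ s ∈ Finset.range b, (p ^ s - q ^ s * x)) * habs

lemma Tb_moment1 {p q : ℝ} (hp : 0 < p) (hq : 0 < q) (x : ℝ) (n : ℕ) :
    ∑ k ∈ Finset.range (n + 1), Tb p q n k x * (p ^ (n - k) * pqInt p q k)
      = p ^ (n.choose 2) * pqInt p q n * x := by
  cases n with
  | zero => simp [pqInt_zero]
  | succ m =>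
      rw [Finset.sum_range_succ']
      simp only [pqInt_zero, mul_zero, add_zero]
      have hterm : ∀ k ∈ Finset.range (m + 1),
          Tb p q (m + 1) (k + 1) x * (p ^ (m + 1 - (k + 1)) * pqInt p q (k + 1))
            = p ^ m * pqInt p q (m + 1) * x * Tb p q m k x := by
        intro k hk
        simp only [Finset.mem_range] at hk
        obtain ⟨b, rfl⟩ : ∃ b, m = k + b := ⟨m - k, by omega⟩
        have s1 : k + b + 1 - (k + 1) = b := by omega
        rw [s1]
        have := Tb_absorb hp hq k b x
        have hpow : p ^ (k + b) = p ^ k * p ^ b := pow_add p k b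
        linear_combination p ^ b * this +
          (pqInt p q (k + b + 1) * x * Tb p q (k + b) k x) * hpow
      rw [Finset.sum_congr rfl hterm, ← Finset.mul_sum, Tb_sum hp hq x m,
        Nat.choose_succ_succ, Nat.choose_one_right, pow_add]
      ring

lemma Tb_moment2 {p q : ℝ} (hp : 0 < p) (hq : 0 < q) (x : ℝ) (m : ℕ) :
    ∑ k ∈ Finset.range (m + 2), Tb p q (m + 1) k x * (p ^ (m + 1 - k) * pqInt p q k) ^ 2
      = p ^ ((m + 1).choose 2) * pqInt p q (m + 1) * x
          * (p ^ m + q * pqInt p q m * x) := by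
  rw [Finset.sum_range_succ']
  simp only [pqInt_zero, mul_zero, zero_pow, add_zero, ne_eq, OfNat.ofNat_ne_zero,
    not_false_eq_true, mul_zero, zero_pow, add_zero]
  have hterm : ∀ k ∈ Finset.range (m + 1),
      Tb p q (m + 1) (k + 1) x * (p ^ (m + 1 - (k + 1)) * pqInt p q (k + 1)) ^ 2
        = pqInt p q (m + 1) * x *
            (p ^ (2 * m) * Tb p q m k x
              + q * p ^ m * (Tb p q m k x * (p ^ (m - k) * pqInt p q k))) := by
    intro k hk
    simp only [Finset.mem_range] at hk
    obtain ⟨b, rfl⟩ : ∃ b, m = k + b := ⟨m - k, by omega⟩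
    have s1 : k + b + 1 - (k + 1) = b := by omega
    have s2 : k + b - k = b := by omega
    rw [s1, s2]
    have habs := Tb_absorb hp hq k b x
    have hsucc : pqInt p q (k + 1) = p ^ k + q * pqInt p q k := pqInt_succ p q k
    have h1 : p ^ (2 * (k + b)) = p ^ k * p ^ b * (p ^ k * p ^ b) := by
      rw [two_mul, pow_add, pow_add]
    have h2 : p ^ (k + b) = p ^ k * p ^ b := pow_add p k b
    calc Tb p q (k + b + 1) (k + 1) x * (p ^ b * pqInt p q (k + 1)) ^ 2
        = (Tb p q (k + b + 1) (k + 1) x * pqInt p q (k + 1))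
            * (p ^ b * p ^ b * pqInt p q (k + 1)) := by ring
      _ = (p ^ k * pqInt p q (k + b + 1) * x * Tb p q (k + b) k x)
            * (p ^ b * p ^ b * (p ^ k + q * pqInt p q k)) := by rw [habs, hsucc]
      _ = _ := by rw [h1, h2]; ring
  rw [Finset.sum_congr rfl hterm, ← Finset.mul_sum]
  rw [Finset.sum_add_distrib, ← Finset.mul_sum, ← Finset.mul_sum, Tb_sum hp hq x m,
    Tb_moment1 hp hq x m, Nat.choose_succ_succ, Nat.choose_one_right, pow_add,
    two_mul, pow_add]
  ring

lemma pqBasis_nonneg {p q x : ℝ} (hq : 0 < q) (hqp : q < p)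
    (hx0 : 0 ≤ x) (hx1 : x ≤ 1) (n k : ℕ) : 0 ≤ pqBasis p q n k x := by
  have hp : 0 < p := hq.trans hqp
  unfold pqBasis
  have h1 : 0 ≤ (p ^ (k.choose 2) / p ^ (n.choose 2)) * pqChoose p q n k * x ^ k := by
    have := pqChoose_pos hp hq n k
    positivity
  refine mul_nonneg h1 (Finset.prod_nonneg fun s _ => ?_)
  have : q ^ s * x ≤ p ^ s := by
    calc q ^ s * x ≤ q ^ s * 1 := by
          exact mul_le_mul_of_nonneg_left hx1 (by positivity)
      _ = q ^ s := mul_one _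
      _ ≤ p ^ s := pow_le_pow_left₀ hq.le hqp.le s
  linarith

lemma sum_pqBasis {p q : ℝ} (hp : 0 < p) (hq : 0 < q) (x : ℝ) (n : ℕ) :
    ∑ k ∈ Finset.range (n + 1), pqBasis p q n k x = 1 := by
  have h : ∀ k ∈ Finset.range (n + 1),
      pqBasis p q n k x = Tb p q n k x / p ^ n.choose 2 := by
    intro k _; unfold pqBasis Tb; ring
  rw [Finset.sum_congr rfl h, ← Finset.sum_div, Tb_sum hp hq,
    div_self (pow_pos hp _).ne']

lemma sum_pqBasis_node {p q : ℝ} (hp : 0 < p) (hq : 0 < q) (x : ℝ) {n : ℕ}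
    (hn : 1 ≤ n) :
    ∑ k ∈ Finset.range (n + 1), pqBasis p q n k x * pqNode p q n k = x := by
  have hN : pqInt p q n ≠ 0 := (pqInt_pos hp hq hn).ne'
  have hP : (p : ℝ) ^ n.choose 2 ≠ 0 := (pow_pos hp _).ne'
  have h : ∀ k ∈ Finset.range (n + 1),
      pqBasis p q n k x * pqNode p q n k
        = Tb p q n k x * (p ^ (n - k) * pqInt p q k)
            / (p ^ n.choose 2 * pqInt p q n) := by
    intro k _; unfold pqBasis pqNode Tb; field_simp; ring
  rw [Finset.sum_congr rfl h, ← Finset.sum_div, Tb_moment1 hp hq x n]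
  field_simp

lemma sum_pqBasis_node_sq {p q : ℝ} (hp : 0 < p) (hq : 0 < q) (x : ℝ) (m : ℕ) :
    ∑ k ∈ Finset.range (m + 2), pqBasis p q (m + 1) k x * pqNode p q (m + 1) k ^ 2
      = x * (p ^ m + q * pqInt p q m * x) / pqInt p q (m + 1) := by
  have hN : pqInt p q (m + 1) ≠ 0 := (pqInt_pos hp hq (by omega)).ne'
  have hP : (p : ℝ) ^ (m + 1).choose 2 ≠ 0 := (pow_pos hp _).ne'
  have h : ∀ k ∈ Finset.range (m + 2),
      pqBasis p q (m + 1) k x * pqNode p q (m + 1) k ^ 2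
        = Tb p q (m + 1) k x * (p ^ (m + 1 - k) * pqInt p q k) ^ 2
            / (p ^ (m + 1).choose 2 * pqInt p q (m + 1) ^ 2) := by
    intro k _; unfold pqBasis pqNode Tb; field_simp; ring
  rw [Finset.sum_congr rfl h, ← Finset.sum_div, Tb_moment2 hp hq x m]
  field_simp

lemma pqVariance {p q : ℝ} (hp : 0 < p) (hq : 0 < q) (x : ℝ) (m : ℕ) :
    ∑ k ∈ Finset.range (m + 2), pqBasis p q (m + 1) k x * (pqNode p q (m + 1) k - x) ^ 2
      = p ^ m / pqInt p q (m + 1) * (x - x ^ 2) := by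
  have hN : pqInt p q (m + 1) ≠ 0 := (pqInt_pos hp hq (by omega)).ne'
  have h : ∀ k ∈ Finset.range (m + 2),
      pqBasis p q (m + 1) k x * (pqNode p q (m + 1) k - x) ^ 2
        = pqBasis p q (m + 1) k x * pqNode p q (m + 1) k ^ 2
            - 2 * x * (pqBasis p q (m + 1) k x * pqNode p q (m + 1) k)
            + x ^ 2 * pqBasis p q (m + 1) k x := by
    intro k _; ring
  rw [Finset.sum_congr rfl h]
  rw [Finset.sum_add_distrib, Finset.sum_sub_distrib, ← Finset.mul_sum, ← Finset.mul_sum]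
  rw [sum_pqBasis_node_sq hp hq x m, sum_pqBasis_node hp hq x (by omega : 1 ≤ m + 1),
    sum_pqBasis hp hq x (m + 1)]
  have hsucc : pqInt p q (m + 1) = p ^ m + q * pqInt p q m := pqInt_succ p q m
  field_simp
  linear_combination (-(x ^ 2)) * hsucc

lemma pqNode_mem {p q : ℝ} (hp : 0 < p) (hq : 0 < q) {n : ℕ} (hn : 1 ≤ n)
    {k : ℕ} (hk : k ≤ n) : pqNode p q n k ∈ Set.Icc (0 : ℝ) 1 := by
  have hN : 0 < pqInt p q n := pqInt_pos hp hq hn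
  unfold pqNode
  constructor
  · exact div_nonneg (mul_nonneg (pow_pos hp _).le (pqInt_nonneg hp hq k)) hN.le
  · rw [div_le_one hN]
    obtain ⟨b, rfl⟩ : ∃ b, n = k + b := ⟨n - k, by omega⟩
    have := pqInt_add p q k b
    have h2 : k + b - k = b := by omega
    rw [h2]
    nlinarith [pqInt_nonneg hp hq b, pow_pos hq k, pqInt_nonneg hp hq k,
      pow_pos hp b, pow_pos hq b]

lemma jensen_rpow {ι : Type*} (t : Finset ι) (w d : ι → ℝ)
    (hw : ∀ i ∈ t, 0 ≤ w i) (hw1 : ∑ i ∈ t, w i = 1)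
    {α : ℝ} (hα0 : 0 < α) (hα1 : α ≤ 1) :
    ∑ i ∈ t, w i * |d i| ^ α ≤ (∑ i ∈ t, w i * d i ^ 2) ^ (α / 2) := by
  have hconc : ConcaveOn ℝ (Set.Ici 0) fun z : ℝ => z ^ (α / 2) :=
    Real.concaveOn_rpow (by linarith) (by linarith)
  have hmem : ∀ i ∈ t, d i ^ 2 ∈ Set.Ici (0 : ℝ) := fun i _ => Set.mem_Ici.mpr (by positivity)
  have H := hconc.le_map_sum hw hw1 hmem
  simp only [smul_eq_mul] at H
  have habs : ∀ i, (d i ^ 2 : ℝ) ^ (α / 2 : ℝ) = |d i| ^ α := by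
    intro i
    rw [← sq_abs, ← Real.rpow_natCast |d i| 2, ← Real.rpow_mul (abs_nonneg _)]
    congr 1
    push_cast
    ring
  calc ∑ i ∈ t, w i * |d i| ^ α = ∑ i ∈ t, w i * (d i ^ 2) ^ (α / 2 : ℝ) := by
        exact Finset.sum_congr rfl fun i _ => by rw [habs]
    _ ≤ (∑ i ∈ t, w i * d i ^ 2) ^ (α / 2 : ℝ) := H

theorem pqBernstein2_rate_lipschitz (p₁ q₁ p₂ q₂ : ℝ) (n m : ℕ)
    (hq₁ : 0 < q₁) (hq₁p₁ : q₁ < p₁) (hp₁ : p₁ ≤ 1)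
    (hq₂ : 0 < q₂) (hq₂p₂ : q₂ < p₂) (hp₂ : p₂ ≤ 1)
    (hn : 1 ≤ n) (hm : 1 ≤ m)
    (α₁ α₂ : ℝ) (hα₁ : α₁ ∈ Set.Ioc (0 : ℝ) 1) (hα₂ : α₂ ∈ Set.Ioc (0 : ℝ) 1)
    (M : ℝ) (hM : 0 < M) (f : ℝ → ℝ → ℝ)
    (hf : ∀ s ∈ Set.Icc (0 : ℝ) 1, ∀ t ∈ Set.Icc (0 : ℝ) 1,
      ∀ x ∈ Set.Icc (0 : ℝ) 1, ∀ y ∈ Set.Icc (0 : ℝ) 1,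
      |f s t - f x y| ≤ M * |s - x| ^ α₁ * |t - y| ^ α₂)
    (x y : ℝ) (hx : x ∈ Set.Icc (0 : ℝ) 1) (hy : y ∈ Set.Icc (0 : ℝ) 1) :
    |pqBernstein2 p₁ q₁ p₂ q₂ n m f x y - f x y| ≤
      M * ((p₁ ^ (n - 1) / pqInt p₁ q₁ n) * (x - x ^ 2)) ^ (α₁ / 2) *
        ((p₂ ^ (m - 1) / pqInt p₂ q₂ m) * (y - y ^ 2)) ^ (α₂ / 2) := by
  obtain ⟨hα₁0, hα₁1⟩ := hα₁
  obtain ⟨hα₂0, hα₂1⟩ := hα₂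
  obtain ⟨hx0, hx1⟩ := hx
  obtain ⟨hy0, hy1⟩ := hy
  have hp1 : 0 < p₁ := hq₁.trans hq₁p₁
  have hp2 : 0 < p₂ := hq₂.trans hq₂p₂
  obtain ⟨n', rfl⟩ : ∃ n', n = n' + 1 := ⟨n - 1, by omega⟩
  obtain ⟨m', rfl⟩ : ∃ m', m = m' + 1 := ⟨m - 1, by omega⟩
  simp only [Nat.add_sub_cancel]
  have hb : ∀ k ∈ Finset.range (n' + 2), 0 ≤ pqBasis p₁ q₁ (n' + 1) k x :=
    fun k _ => pqBasis_nonneg hq₁ hq₁p₁ hx0 hx1 _ k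
  have hc : ∀ j ∈ Finset.range (m' + 2), 0 ≤ pqBasis p₂ q₂ (m' + 1) j y :=
    fun j _ => pqBasis_nonneg hq₂ hq₂p₂ hy0 hy1 _ j
  have hb1 : ∑ k ∈ Finset.range (n' + 2), pqBasis p₁ q₁ (n' + 1) k x = 1 :=
    sum_pqBasis hp1 hq₁ x (n' + 1)
  have hc1 : ∑ j ∈ Finset.range (m' + 2), pqBasis p₂ q₂ (m' + 1) j y = 1 :=
    sum_pqBasis hp2 hq₂ y (m' + 1)
  set V₁ : ℝ := p₁ ^ n' / pqInt p₁ q₁ (n' + 1) * (x - x ^ 2) with hV₁def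
  set V₂ : ℝ := p₂ ^ m' / pqInt p₂ q₂ (m' + 1) * (y - y ^ 2) with hV₂def
  have hV₁0 : 0 ≤ V₁ := by
    have h1 : 0 ≤ x - x ^ 2 := by nlinarith
    have h2 : 0 < pqInt p₁ q₁ (n' + 1) := pqInt_pos hp1 hq₁ (by omega)
    rw [hV₁def]; positivity
  have hV₂0 : 0 ≤ V₂ := by
    have h1 : 0 ≤ y - y ^ 2 := by nlinarith
    have h2 : 0 < pqInt p₂ q₂ (m' + 1) := pqInt_pos hp2 hq₂ (by omega)
    rw [hV₂def]; positivity
  have hA : ∑ k ∈ Finset.range (n' + 2),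
      pqBasis p₁ q₁ (n' + 1) k x * |pqNode p₁ q₁ (n' + 1) k - x| ^ α₁
        ≤ V₁ ^ (α₁ / 2) := by
    have hj := jensen_rpow (Finset.range (n' + 2)) (fun k => pqBasis p₁ q₁ (n' + 1) k x)
      (fun k => pqNode p₁ q₁ (n' + 1) k - x) hb hb1 hα₁0 hα₁1
    rwa [pqVariance hp1 hq₁ x n'] at hj
  have hB : ∑ j ∈ Finset.range (m' + 2),
      pqBasis p₂ q₂ (m' + 1) j y * |pqNode p₂ q₂ (m' + 1) j - y| ^ α₂
        ≤ V₂ ^ (α₂ / 2) := by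
    have hj := jensen_rpow (Finset.range (m' + 2)) (fun j => pqBasis p₂ q₂ (m' + 1) j y)
      (fun j => pqNode p₂ q₂ (m' + 1) j - y) hc hc1 hα₂0 hα₂1
    rwa [pqVariance hp2 hq₂ y m'] at hj
  have h1 : ∑ k ∈ Finset.range (n' + 2), ∑ j ∈ Finset.range (m' + 2),
      pqBasis p₁ q₁ (n' + 1) k x * pqBasis p₂ q₂ (m' + 1) j y = 1 := by
    rw [← Finset.sum_mul_sum, hb1, hc1, one_mul]
  have hB2 : pqBernstein2 p₁ q₁ p₂ q₂ (n' + 1) (m' + 1) f x y - f x y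
      = ∑ k ∈ Finset.range (n' + 2), ∑ j ∈ Finset.range (m' + 2),
          pqBasis p₁ q₁ (n' + 1) k x * pqBasis p₂ q₂ (m' + 1) j y
            * (f (pqNode p₁ q₁ (n' + 1) k) (pqNode p₂ q₂ (m' + 1) j) - f x y) := by
    have hexp : ∑ k ∈ Finset.range (n' + 2), ∑ j ∈ Finset.range (m' + 2),
        pqBasis p₁ q₁ (n' + 1) k x * pqBasis p₂ q₂ (m' + 1) j y
          * (f (pqNode p₁ q₁ (n' + 1) k) (pqNode p₂ q₂ (m' + 1) j) - f x y)
        = (∑ k ∈ Finset.range (n' + 2), ∑ j ∈ Finset.range (m' + 2),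
            pqBasis p₁ q₁ (n' + 1) k x * pqBasis p₂ q₂ (m' + 1) j y
              * f (pqNode p₁ q₁ (n' + 1) k) (pqNode p₂ q₂ (m' + 1) j))
          - (∑ k ∈ Finset.range (n' + 2), ∑ j ∈ Finset.range (m' + 2),
              pqBasis p₁ q₁ (n' + 1) k x * pqBasis p₂ q₂ (m' + 1) j y) * f x y := by
      rw [Finset.sum_mul, ← Finset.sum_sub_distrib]
      refine Finset.sum_congr rfl fun k _ => ?_
      rw [Finset.sum_mul, ← Finset.sum_sub_distrib]
      exact Finset.sum_congr rfl fun j _ => by ring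
    rw [hexp, h1, one_mul]
    rfl
  have hbound : ∀ k ∈ Finset.range (n' + 2), ∀ j ∈ Finset.range (m' + 2),
      |pqBasis p₁ q₁ (n' + 1) k x * pqBasis p₂ q₂ (m' + 1) j y
          * (f (pqNode p₁ q₁ (n' + 1) k) (pqNode p₂ q₂ (m' + 1) j) - f x y)|
        ≤ pqBasis p₁ q₁ (n' + 1) k x * pqBasis p₂ q₂ (m' + 1) j y
            * (M * |pqNode p₁ q₁ (n' + 1) k - x| ^ α₁
                * |pqNode p₂ q₂ (m' + 1) j - y| ^ α₂) := by
    intro k hk j hj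
    rw [abs_mul, abs_mul, abs_of_nonneg (hb k hk), abs_of_nonneg (hc j hj)]
    refine mul_le_mul_of_nonneg_left ?_ (mul_nonneg (hb k hk) (hc j hj))
    exact hf _ (pqNode_mem hp1 hq₁ (by omega) (by have := Finset.mem_range.mp hk; omega))
      _ (pqNode_mem hp2 hq₂ (by omega) (by have := Finset.mem_range.mp hj; omega))
      x ⟨hx0, hx1⟩ y ⟨hy0, hy1⟩
  calc |pqBernstein2 p₁ q₁ p₂ q₂ (n' + 1) (m' + 1) f x y - f x y|
      = |∑ k ∈ Finset.range (n' + 2), ∑ j ∈ Finset.range (m' + 2),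
          pqBasis p₁ q₁ (n' + 1) k x * pqBasis p₂ q₂ (m' + 1) j y
            * (f (pqNode p₁ q₁ (n' + 1) k) (pqNode p₂ q₂ (m' + 1) j) - f x y)| := by
        rw [hB2]
    _ ≤ ∑ k ∈ Finset.range (n' + 2), ∑ j ∈ Finset.range (m' + 2),
          |pqBasis p₁ q₁ (n' + 1) k x * pqBasis p₂ q₂ (m' + 1) j y
            * (f (pqNode p₁ q₁ (n' + 1) k) (pqNode p₂ q₂ (m' + 1) j) - f x y)| := by
        refine (Finset.abs_sum_le_sum_abs _ _).trans ?_
        exact Finset.sum_le_sum fun k _ => Finset.abs_sum_le_sum_abs _ _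
    _ ≤ ∑ k ∈ Finset.range (n' + 2), ∑ j ∈ Finset.range (m' + 2),
          pqBasis p₁ q₁ (n' + 1) k x * pqBasis p₂ q₂ (m' + 1) j y
            * (M * |pqNode p₁ q₁ (n' + 1) k - x| ^ α₁
                * |pqNode p₂ q₂ (m' + 1) j - y| ^ α₂) :=
        Finset.sum_le_sum fun k hk => Finset.sum_le_sum fun j hj => hbound k hk j hj
    _ = M * (∑ k ∈ Finset.range (n' + 2),
            pqBasis p₁ q₁ (n' + 1) k x * |pqNode p₁ q₁ (n' + 1) k - x| ^ α₁)
          * (∑ j ∈ Finset.range (m' + 2),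
            pqBasis p₂ q₂ (m' + 1) j y * |pqNode p₂ q₂ (m' + 1) j - y| ^ α₂) := by
        rw [mul_assoc, Finset.sum_mul_sum, Finset.mul_sum]
        refine Finset.sum_congr rfl fun k _ => ?_
        rw [Finset.mul_sum]
        exact Finset.sum_congr rfl fun j _ => by ring
    _ ≤ M * V₁ ^ (α₁ / 2) * V₂ ^ (α₂ / 2) := by
        have hBnn : 0 ≤ ∑ j ∈ Finset.range (m' + 2),
            pqBasis p₂ q₂ (m' + 1) j y * |pqNode p₂ q₂ (m' + 1) j - y| ^ α₂ :=
          Finset.sum_nonneg fun j hj =>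
            mul_nonneg (hc j hj) (Real.rpow_nonneg (abs_nonneg _) _)
        have hMV : 0 ≤ M * V₁ ^ (α₁ / 2) :=
          mul_nonneg hM.le (Real.rpow_nonneg hV₁0 _)
        exact mul_le_mul (mul_le_mul_of_nonneg_left hA hM.le) hB hBnn hMV
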